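/- The identity Σ_{s≥1} q^{2s+1}/(q^s;q)_∞ = 1 − q + (2q−1)/(q;q)_∞ holds for |q| < 1 (equivalently as formal power series). -/

import Mathlib

open Complex Filter Finset

namespace Stmt5Aux

variable {q : ℂ}

/-- The constant in the log bound. -/
noncomputable def C (q : ℂ) : ℝ := ‖q‖ * (1 - ‖q‖)⁻¹ / 2 + 1

lemma normpow (hq : ‖q‖ < 1) {m : ℕ} (hm : 1 ≤ m) : ‖q ^ m‖ ≤ ‖q‖ ∧ ‖q ^ m‖ < 1 := by
  rw [norm_pow]
  constructor
  · calc ‖q‖ ^ m ≤ ‖q‖ ^ 1 := pow_le_pow_of_le_one (norm_nonneg q) hq.le hm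
    _ = ‖q‖ := pow_one _
  · exact lt_of_le_of_lt (le_trans (pow_le_pow_of_le_one (norm_nonneg q) hq.le hm)
      (by rw [pow_one])) hq

lemma logbound (hq : ‖q‖ < 1) {m : ℕ} (hm : 1 ≤ m) :
    ‖Complex.log (1 - q ^ m)‖ ≤ C q * ‖q‖ ^ m := by
  obtain ⟨h1, h2⟩ := normpow hq hm
  have h0 : (0:ℝ) ≤ ‖q‖ ^ m := pow_nonneg (norm_nonneg q) m
  have hz : ‖-(q ^ m)‖ < 1 := by rwa [norm_neg]
  have := Complex.norm_log_one_add_le hz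
  rw [norm_neg, norm_pow] at this
  have heq : (1 : ℂ) + -(q ^ m) = 1 - q ^ m := by ring
  rw [heq] at this
  refine this.trans ?_
  rw [norm_pow] at h1 h2
  have hinv : (1 - ‖q‖ ^ m)⁻¹ ≤ (1 - ‖q‖)⁻¹ := by
    apply inv_anti₀ (by linarith) (by linarith)
  have hsq : (‖q‖ ^ m) ^ 2 ≤ ‖q‖ * ‖q‖ ^ m := by
    nlinarith
  have hinvpos : (0:ℝ) < (1 - ‖q‖)⁻¹ := inv_pos.mpr (by linarith)
  unfold C
  have hmpos : (0:ℝ) < 1 - ‖q‖ ^ m := by linarith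
  nlinarith [mul_le_mul hsq hinv (inv_nonneg.mpr hmpos.le) (by positivity : (0:ℝ) ≤ ‖q‖ * ‖q‖ ^ m)]

lemma sumlog (hq : ‖q‖ < 1) {n : ℕ} (hn : 1 ≤ n) :
    Summable fun i : ℕ => Complex.log (1 - q ^ (n + i)) := by
  apply Summable.of_norm_bounded (g := fun i => (C q * ‖q‖ ^ n) * ‖q‖ ^ i)
  · exact (summable_geometric_of_lt_one (norm_nonneg q) hq).mul_left _
  · intro i
    have := logbound hq (m := n + i) (by omega)
    rw [mul_assoc, ← pow_add]
    exact this

lemma sumlognorm (hq : ‖q‖ < 1) {n : ℕ} (hn : 1 ≤ n) :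
    Summable fun i : ℕ => ‖Complex.log (1 - q ^ (n + i))‖ := by
  apply Summable.of_nonneg_of_le (f := fun i => (C q * ‖q‖ ^ n) * ‖q‖ ^ i)
    (fun i => norm_nonneg _)
  · intro i
    have := logbound hq (m := n + i) (by omega)
    rw [mul_assoc, ← pow_add]
    exact this
  · exact (summable_geometric_of_lt_one (norm_nonneg q) hq).mul_left _

lemma factor_ne (hq : ‖q‖ < 1) {m : ℕ} (hm : 1 ≤ m) : (1 : ℂ) - q ^ m ≠ 0 := by
  intro h
  have h2 := (normpow hq hm).2
  rw [sub_eq_zero] at h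
  rw [← h] at h2
  simp at h2

lemma prod_eq_exp (hq : ‖q‖ < 1) {n : ℕ} (hn : 1 ≤ n) :
    (∏' i : ℕ, (1 - q ^ (n + i)))
      = Complex.exp (∑' i : ℕ, Complex.log (1 - q ^ (n + i))) := by
  have hfn : ∀ (_ : Unit) (i : ℕ), (1 : ℂ) - q ^ (n + i) ≠ 0 :=
    fun _ i => factor_ne hq (by omega)
  have hf : ∀ (_ : Unit), Summable fun i : ℕ => Complex.log (1 - q ^ (n + i)) :=
    fun _ => (sumlognorm hq hn).of_norm
  have := Complex.cexp_tsum_eq_tprod (f := fun i => 1 - q ^ (n + i)) (hfn ()) (hf ())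
  exact this.symm

lemma prod_ne (hq : ‖q‖ < 1) {n : ℕ} (hn : 1 ≤ n) :
    (∏' i : ℕ, (1 - q ^ (n + i))) ≠ 0 := by
  rw [prod_eq_exp hq hn]; exact Complex.exp_ne_zero _

lemma prod_multipliable (hq : ‖q‖ < 1) {n : ℕ} (hn : 1 ≤ n) :
    Multipliable fun i : ℕ => (1 : ℂ) - q ^ (n + i) := by
  have hfn : ∀ (_ : Unit) (i : ℕ), (1 : ℂ) - q ^ (n + i) ≠ 0 :=
    fun _ i => factor_ne hq (by omega)
  have hf : ∀ (_ : Unit), Summable fun i : ℕ => Complex.log (1 - q ^ (n + i)) :=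
    fun _ => (sumlognorm hq hn).of_norm
  exact Complex.multipliable_of_summable_log (hf ())

lemma recurrence (hq : ‖q‖ < 1) {n : ℕ} (hn : 1 ≤ n) :
    (∏' i : ℕ, (1 - q ^ (n + i)))
      = (1 - q ^ n) * ∏' i : ℕ, (1 - q ^ ((n + 1) + i)) := by
  have hm : Multipliable fun i : ℕ => (1:ℂ) - q ^ (n + (i + 1)) :=
    (prod_multipliable hq (n := n + 1) (by omega)).congr fun i => by
      rw [show (n + 1) + i = n + (i + 1) by omega]
  rw [tprod_eq_zero_mul' (f := fun i : ℕ => (1:ℂ) - q ^ (n + i)) hm, add_zero]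
  congr 1
  exact tprod_congr fun b => by rw [show n + (b + 1) = (n + 1) + b by omega]

lemma tsumlog_bound (hq : ‖q‖ < 1) {n : ℕ} (hn : 1 ≤ n) :
    ‖∑' i : ℕ, Complex.log (1 - q ^ (n + i))‖ ≤ C q * ‖q‖ ^ n * (1 - ‖q‖)⁻¹ := by
  refine (norm_tsum_le_tsum_norm (sumlognorm hq hn)).trans ?_
  have h1 : ∑' i : ℕ, ‖Complex.log (1 - q ^ (n + i))‖
      ≤ ∑' i : ℕ, (C q * ‖q‖ ^ n) * ‖q‖ ^ i := by
    apply Summable.tsum_le_tsum _ (sumlognorm hq hn)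
      ((summable_geometric_of_lt_one (norm_nonneg q) hq).mul_left _)
    intro i
    have := logbound hq (m := n + i) (by omega)
    rw [mul_assoc, ← pow_add]
    exact this
  refine h1.trans ?_
  rw [tsum_mul_left, tsum_geometric_of_lt_one (norm_nonneg q) hq, mul_assoc]

lemma Cnonneg (hq : ‖q‖ < 1) : 0 ≤ C q := by
  unfold C
  have : (0:ℝ) < (1 - ‖q‖)⁻¹ := inv_pos.mpr (by linarith)
  have := norm_nonneg q
  positivity

lemma prod_norm_lb (hq : ‖q‖ < 1) {n : ℕ} (hn : 1 ≤ n) :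
    Real.exp (-(C q * ‖q‖ * (1 - ‖q‖)⁻¹)) ≤ ‖∏' i : ℕ, (1 - q ^ (n + i))‖ := by
  rw [prod_eq_exp hq hn]
  set S := ∑' i : ℕ, Complex.log (1 - q ^ (n + i)) with hS
  have hnorm : ‖Complex.exp S‖ = Real.exp S.re := by
    rw [Complex.norm_exp]
  rw [hnorm]
  apply Real.exp_le_exp.mpr
  have h1 : -‖S‖ ≤ S.re := by
    have := Complex.abs_re_le_norm S
    rw [abs_le] at this
    simpa using this.1
  have h2 : ‖S‖ ≤ C q * ‖q‖ * (1 - ‖q‖)⁻¹ := by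
    refine (tsumlog_bound hq hn).trans ?_
    have hinv : (0:ℝ) ≤ (1 - ‖q‖)⁻¹ := (inv_pos.mpr (by linarith)).le
    have hpow : ‖q‖ ^ n ≤ ‖q‖ := by
      calc ‖q‖ ^ n ≤ ‖q‖ ^ 1 := pow_le_pow_of_le_one (norm_nonneg q) hq.le hn
      _ = ‖q‖ := pow_one _
    have hC := Cnonneg hq
    have := mul_le_mul_of_nonneg_right (mul_le_mul_of_nonneg_left hpow hC) hinv
    linarith
  linarith

lemma tendsto_P (hq : ‖q‖ < 1) :
    Filter.Tendsto (fun n : ℕ => ∏' i : ℕ, (1 - q ^ ((n + 1) + i))) atTop (nhds 1) := by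
  have hS : Filter.Tendsto (fun n : ℕ => ∑' i : ℕ, Complex.log (1 - q ^ ((n + 1) + i)))
      atTop (nhds 0) := by
    apply squeeze_zero_norm (fun n => tsumlog_bound hq (n := n + 1) (by omega))
    have h1 : Filter.Tendsto (fun n : ℕ => ‖q‖ ^ (n + 1)) atTop (nhds 0) :=
      (tendsto_pow_atTop_nhds_zero_of_norm_lt_one (by rwa [Real.norm_eq_abs,
        _root_.abs_of_nonneg (norm_nonneg q)])).comp (tendsto_add_atTop_nat 1)
    have := (h1.const_mul (C q)).mul_const (1 - ‖q‖)⁻¹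
    simpa using this
  have h2 := (Complex.continuous_exp.tendsto 0).comp hS
  rw [Complex.exp_zero] at h2
  refine h2.congr fun n => ?_
  exact (prod_eq_exp hq (n := n + 1) (by omega)).symm

end Stmt5Aux

open Stmt5Aux in
/-- **Corollary 4.4.** For `‖q‖ < 1`,
`Σ_{s ≥ 1} q^{2s+1}/(q^s;q)_∞ = 1 - q + (2q-1)/(q;q)_∞`. -/
theorem stmt5 (q : ℂ) (hq : ‖q‖ < 1) :
    ∑' s : ℕ, q ^ (2 * (s + 1) + 1) / (∏' i : ℕ, (1 - q ^ ((s + 1) + i)))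
      = 1 - q + (2 * q - 1) / (∏' i : ℕ, (1 - q ^ (i + 1))) := by
  set f : ℕ → ℂ := fun n => (q ^ n + q - 1) / (∏' i : ℕ, (1 - q ^ (n + i))) with hf
  have hterm : ∀ s : ℕ, q ^ (2 * (s + 1) + 1) / (∏' i : ℕ, (1 - q ^ ((s + 1) + i)))
      = f (s + 1) - f (s + 2) := by
    intro s
    have hrec := recurrence hq (n := s + 1) (by omega)
    have hne2 : (∏' i : ℕ, (1 - q ^ ((s + 1 + 1) + i))) ≠ 0 := prod_ne hq (by omega)
    have hne1 : (1 : ℂ) - q ^ (s + 1) ≠ 0 := factor_ne hq (by omega)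
    have h22 : s + 2 = s + 1 + 1 := rfl
    rw [hf]
    simp only [h22]
    rw [hrec]
    field_simp
    ring
  rw [tsum_congr hterm]
  set M := Real.exp (-(C q * ‖q‖ * (1 - ‖q‖)⁻¹)) with hM
  have hMpos : 0 < M := Real.exp_pos _
  have hsum : Summable fun s : ℕ => f (s + 1) - f (s + 2) := by
    apply Summable.of_norm_bounded (g := fun s : ℕ => (M⁻¹ * ‖q‖ ^ 3) * (‖q‖ ^ 2) ^ s)
    · exact (summable_geometric_of_lt_one (by positivity)
        (by nlinarith [norm_nonneg q])).mul_left _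
    · intro s
      rw [← hterm s, norm_div, norm_pow]
      have hlb := prod_norm_lb hq (n := s + 1) (by omega)
      rw [← hM] at hlb
      have hPpos : 0 < ‖∏' i : ℕ, (1 - q ^ ((s + 1) + i))‖ := lt_of_lt_of_le hMpos hlb
      have h1 : ‖q‖ ^ (2 * (s + 1) + 1) / ‖∏' i : ℕ, (1 - q ^ ((s + 1) + i))‖
          ≤ ‖q‖ ^ (2 * (s + 1) + 1) / M :=
        div_le_div_of_nonneg_left (by positivity) hMpos hlb
      refine h1.trans ?_
      rw [show 2 * (s + 1) + 1 = 2 * s + 3 by omega, pow_add, pow_mul]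
      rw [div_eq_mul_inv]
      ring_nf
      exact le_refl _
  have htel : ∀ n : ℕ, ∑ s ∈ Finset.range n, (f (s + 1) - f (s + 2)) = f 1 - f (n + 1) := by
    intro n
    have := Finset.sum_range_sub' (fun i => f (i + 1)) n
    simpa using this
  have hlim : Filter.Tendsto (fun n : ℕ => f (n + 1)) atTop (nhds (q - 1)) := by
    have hnum : Filter.Tendsto (fun n : ℕ => q ^ (n + 1) + q - 1) atTop (nhds (q - 1)) := by
      have h0 : Filter.Tendsto (fun n : ℕ => q ^ (n + 1)) atTop (nhds 0) :=
        (tendsto_pow_atTop_nhds_zero_of_norm_lt_one hq).comp (tendsto_add_atTop_nat 1)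
      have h3 := h0.add_const (q - 1)
      rw [zero_add] at h3
      exact h3.congr fun n => by ring
    have hden := tendsto_P (q := q) hq
    have := hnum.div hden one_ne_zero
    simpa [hf, Pi.div_def] using this
  have h2 : Filter.Tendsto (fun n : ℕ => ∑ s ∈ Finset.range n, (f (s + 1) - f (s + 2)))
      atTop (nhds (f 1 - (q - 1))) := by
    simp only [htel]
    exact tendsto_const_nhds.sub hlim
  have hval : ∑' s : ℕ, (f (s + 1) - f (s + 2)) = f 1 - (q - 1) :=
    tendsto_nhds_unique hsum.hasSum.tendsto_sum_nat h2
  rw [hval]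
  have hP1 : (∏' i : ℕ, (1 - q ^ (i + 1))) = ∏' i : ℕ, (1 - q ^ (1 + i)) :=
    tprod_congr fun i => by rw [add_comm]
  rw [hP1, hf]
  have hne := prod_ne hq (n := 1) (le_refl 1)
  simp only [pow_one]
  field_simp
  ring
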